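/- Let Θ̂ = [Â B̂] and Θ* = [A* B*] be matrices in ℝ^{n×(n+m)}, K ∈ ℝ^{m×n} with ‖K‖_F ≤ K̄, and suppose there exist C ≥ 1 and ρ ∈ (0,1) with ‖(Â + B̂K)^k‖_F ≤ C ρ^k and ‖(A* + B*K)^k‖_F ≤ C ρ^k for all k ≥ 0. Let σ_w > 0, and for Θ ∈ {Θ̂, Θ*} define Σ_Θ := σ_w² ∑_{k=0}^∞ (A+BK)^k ((A+BK)ᵀ)^k and Σ̃_Θ := [I; K] Σ_Θ [I; K]ᵀ. Let Q and R be real symmetric matrices of sizes n and m, let λ > 0, D ≥ 0, and assume ‖Θ̂ − Θ*‖_F ≤ 2/λ and ‖Θ*‖_F ≤ D + 1/λ. Then | tr((Q + Kᵀ R K)(Σ_{Θ*} − Σ_{Θ̂})) | ≤ c · tr(Σ̃_{Θ̂}), where c := (1/λ)(D + 2/λ) · 4C²(‖Q‖_F + K̄² ‖R‖_F)/(1−ρ²). -/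

import Mathlib

open Matrix MeasureTheory ProbabilityTheory Filter

/-- Frobenius norm of a real matrix. -/
noncomputable def frob {α β : Type*} [Fintype α] [Fintype β] (A : Matrix α β ℝ) : ℝ :=
  Real.sqrt (∑ i, ∑ j, (A i j) ^ 2)

/-- Spectral norm (largest singular value) of a real matrix. -/
noncomputable def spec {α β : Type*} [Fintype α] [Fintype β] [DecidableEq β]
    (A : Matrix α β ℝ) : ℝ :=
  ‖LinearMap.toContinuousLinearMap (Matrix.toEuclideanLin A)‖

/-- The positive semidefinite square root of a positive semidefinite real matrix
(junk value `0` if the matrix is not positive semidefinite). -/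
noncomputable def msqrt {α : Type*} [Fintype α] [DecidableEq α]
    (M : Matrix α α ℝ) : Matrix α α ℝ :=
  open scoped Classical in
  if h : M.PosSemidef then
    (h.1.eigenvectorUnitary : Matrix α α ℝ) * diagonal (Real.sqrt ∘ h.1.eigenvalues) *
      (star h.1.eigenvectorUnitary : Matrix α α ℝ)
  else 0

/-- Euclidean norm of a real vector. -/
noncomputable def vnorm {α : Type*} [Fintype α] (v : α → ℝ) : ℝ :=
  Real.sqrt (∑ i, (v i) ^ 2)

/-- Closed-loop stationary state covariance
`Σ_Θ = σ_w² ∑_{k=0}^∞ (A+BK)^k ((A+BK)ᵀ)^k`. -/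
noncomputable def clCov {n m : ℕ} (A : Matrix (Fin n) (Fin n) ℝ)
    (B : Matrix (Fin n) (Fin m) ℝ) (K : Matrix (Fin m) (Fin n) ℝ) (σw : ℝ) :
    Matrix (Fin n) (Fin n) ℝ :=
  σw ^ 2 • ∑' k : ℕ, (A + B * K) ^ k * ((A + B * K)ᵀ) ^ k

/-- The lifted covariance `Σ̃_Θ = [I; K] Σ_Θ [I; K]ᵀ`. -/
noncomputable def clCovTilde {n m : ℕ} (A : Matrix (Fin n) (Fin n) ℝ)
    (B : Matrix (Fin n) (Fin m) ℝ) (K : Matrix (Fin m) (Fin n) ℝ) (σw : ℝ) :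
    Matrix (Fin n ⊕ Fin m) (Fin n ⊕ Fin m) ℝ :=
  fromRows (1 : Matrix (Fin n) (Fin n) ℝ) K * clCov A B K σw *
    (fromRows (1 : Matrix (Fin n) (Fin n) ℝ) K)ᵀ

/-! ### Auxiliary lemmas about the Frobenius norm -/

section FrobLemmas

attribute [local instance] Matrix.frobeniusSeminormedAddCommGroup

variable {α β γ : Type*} [Fintype α] [Fintype β] [Fintype γ]

lemma frob_eq_norm (A : Matrix α β ℝ) : frob A = ‖A‖ := by
  rw [Matrix.frobenius_norm_def, frob, Real.sqrt_eq_rpow]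
  congr 1
  refine Finset.sum_congr rfl fun i _ => Finset.sum_congr rfl fun j _ => ?_
  rw [Real.norm_eq_abs, show (2:ℝ) = ((2:ℕ):ℝ) by norm_num, Real.rpow_natCast, sq_abs]

lemma frob_nonneg (A : Matrix α β ℝ) : 0 ≤ frob A := Real.sqrt_nonneg _

lemma frob_transpose (A : Matrix α β ℝ) : frob Aᵀ = frob A := by
  rw [frob_eq_norm, frob_eq_norm, Matrix.frobenius_norm_transpose]

lemma frob_mul_le (A : Matrix α β ℝ) (B : Matrix β γ ℝ) : frob (A * B) ≤ frob A * frob B := by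
  rw [frob_eq_norm, frob_eq_norm, frob_eq_norm]
  exact Matrix.frobenius_norm_mul A B

lemma frob_add_le (A B : Matrix α β ℝ) : frob (A + B) ≤ frob A + frob B := by
  rw [frob_eq_norm, frob_eq_norm, frob_eq_norm]; exact norm_add_le _ _

lemma frob_neg (A : Matrix α β ℝ) : frob (-A) = frob A := by
  rw [frob_eq_norm, frob_eq_norm]; exact norm_neg _

lemma summable_pow_mul_transpose {α : Type*} [Fintype α] [DecidableEq α]
    (L : Matrix α α ℝ) {C ρ : ℝ} (hρ0 : 0 < ρ) (hρ1 : ρ < 1)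
    (hL : ∀ k, frob (L ^ k) ≤ C * ρ ^ k) :
    Summable (fun k : ℕ => L ^ k * (L ^ k)ᵀ) := by
  haveI : @CompleteSpace (Matrix α α ℝ) PseudoMetricSpace.toUniformSpace := by
    exact inferInstanceAs (CompleteSpace (α → α → ℝ))
  refine Summable.of_norm_bounded (g := fun k => (C * C) * (ρ * ρ) ^ k) ?_ ?_
  · exact (summable_geometric_of_lt_one (by positivity) (by nlinarith)).mul_left _
  · intro k
    calc ‖L ^ k * (L ^ k)ᵀ‖ ≤ ‖L ^ k‖ * ‖(L ^ k)ᵀ‖ := Matrix.frobenius_norm_mul _ _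
      _ = frob (L ^ k) * frob (L ^ k) := by
          rw [← frob_eq_norm, ← frob_eq_norm, frob_transpose]
      _ ≤ (C * ρ ^ k) * (C * ρ ^ k) :=
          mul_le_mul (hL k) (hL k) (frob_nonneg _) (le_trans (frob_nonneg _) (hL k))
      _ = (C * C) * (ρ * ρ) ^ k := by rw [mul_pow]; ring

end FrobLemmas

/-! ### Trace inequalities -/

lemma conjT_eq_transpose {α β : Type*} (A : Matrix α β ℝ) : Aᴴ = Aᵀ := by
  ext i j; simp [Matrix.conjTranspose_apply]

section Trace

variable {α β : Type*} [Fintype α] [Fintype β]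

lemma trace_abs_le (A B : Matrix α β ℝ) : |(A * Bᵀ).trace| ≤ frob A * frob B := by
  have ht : (A * Bᵀ).trace = ∑ p : α × β, A p.1 p.2 * B p.1 p.2 := by
    rw [Matrix.trace]
    simp only [Matrix.diag_apply, Matrix.mul_apply, Matrix.transpose_apply]
    rw [← Finset.sum_product']
    rfl
  have hcs := Finset.sum_mul_sq_le_sq_mul_sq Finset.univ
      (fun p : α × β => A p.1 p.2) (fun p : α × β => B p.1 p.2)
  have hA : (∑ p : α × β, A p.1 p.2 ^ 2) = frob A ^ 2 := by
    rw [frob, Real.sq_sqrt (by positivity), ← Finset.sum_product']; rfl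
  have hB : (∑ p : α × β, B p.1 p.2 ^ 2) = frob B ^ 2 := by
    rw [frob, Real.sq_sqrt (by positivity), ← Finset.sum_product']; rfl
  rw [ht]
  have h2 : (∑ p : α × β, A p.1 p.2 * B p.1 p.2) ^ 2 ≤ (frob A * frob B) ^ 2 := by
    calc (∑ p : α × β, A p.1 p.2 * B p.1 p.2) ^ 2
        ≤ (∑ p : α × β, A p.1 p.2 ^ 2) * (∑ p : α × β, B p.1 p.2 ^ 2) := hcs
      _ = (frob A * frob B) ^ 2 := by rw [hA, hB]; ring
  calc |∑ p : α × β, A p.1 p.2 * B p.1 p.2|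
      = Real.sqrt ((∑ p : α × β, A p.1 p.2 * B p.1 p.2) ^ 2) := (Real.sqrt_sq_eq_abs _).symm
    _ ≤ Real.sqrt ((frob A * frob B) ^ 2) := Real.sqrt_le_sqrt h2
    _ = frob A * frob B := Real.sqrt_sq (mul_nonneg (frob_nonneg _) (frob_nonneg _))

lemma trace_mul_abs_le (A : Matrix α β ℝ) (B : Matrix β α ℝ) :
    |(A * B).trace| ≤ frob A * frob B := by
  have := trace_abs_le A Bᵀ
  rwa [Matrix.transpose_transpose, frob_transpose] at this

end Trace

section PSD

variable {α : Type*} [Fintype α] [DecidableEq α]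

lemma psd_trace_nonneg {M : Matrix α α ℝ} (h : M.PosSemidef) : 0 ≤ M.trace := by
  rw [Matrix.trace]
  refine Finset.sum_nonneg fun i _ => ?_
  have := h.dotProduct_mulVec_nonneg (Pi.single i 1)
  simpa [Matrix.diag_apply, Matrix.mulVec, dotProduct, Pi.single_apply,
    Finset.sum_ite_eq, Finset.sum_ite_eq'] using this

lemma psd_trace_bound {S : Matrix α α ℝ} (hS : S.PosSemidef) (X : Matrix α α ℝ) :
    |(X * S).trace| ≤ frob X * S.trace := by
  set r := (open scoped MatrixOrder in CFC.sqrt S) with hrdef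
  have hrr : r * r = S := by open scoped MatrixOrder in exact CFC.sqrt_mul_sqrt_self S hS.nonneg
  have hrsymm : rᵀ = r := by
    have h1 : rᴴ = r := by open scoped MatrixOrder in exact (CFC.sqrt_nonneg S).posSemidef.1
    rwa [conjT_eq_transpose] at h1
  have h1 : (X * S).trace = ((r * X) * r).trace := by
    rw [← hrr, ← Matrix.mul_assoc, Matrix.trace_mul_cycle]
  have h2 : |((r * X) * r).trace| ≤ frob (r * X) * frob rᵀ := by
    have := trace_abs_le (r * X) rᵀ
    rwa [Matrix.transpose_transpose] at this
  have hfrr : frob r * frob r = S.trace := by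
    have hs : S.trace = ∑ i, ∑ j, r i j ^ 2 := by
      rw [← hrr, Matrix.trace]
      simp only [Matrix.diag_apply, Matrix.mul_apply]
      refine Finset.sum_congr rfl fun i _ => Finset.sum_congr rfl fun j _ => ?_
      have hji : r j i = r i j := by
        have := congrFun (congrFun hrsymm j) i
        simpa [Matrix.transpose_apply] using this.symm
      rw [hji]; ring
    rw [hs, frob]
    exact Real.mul_self_sqrt
      (Finset.sum_nonneg fun i _ => Finset.sum_nonneg fun j _ => sq_nonneg _)
  rw [h1]
  refine h2.trans ?_
  rw [frob_transpose]
  calc frob (r * X) * frob r ≤ (frob r * frob X) * frob r :=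
      mul_le_mul_of_nonneg_right (frob_mul_le _ _) (frob_nonneg _)
    _ = frob X * (frob r * frob r) := by ring
    _ = frob X * S.trace := by rw [hfrr]

end PSD

/-! ### Lyapunov equation and positive semidefiniteness for `clCov` -/

section Lyap
variable {n m : ℕ}

lemma clCov_eq (A : Matrix (Fin n) (Fin n) ℝ) (B : Matrix (Fin n) (Fin m) ℝ)
    (K : Matrix (Fin m) (Fin n) ℝ) (σw : ℝ) :
    clCov A B K σw = σw ^ 2 • ∑' k : ℕ, (A + B * K) ^ k * ((A + B * K) ^ k)ᵀ := by
  unfold clCov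
  congr 1
  exact tsum_congr fun k => by rw [Matrix.transpose_pow]

lemma clCov_lyap (A : Matrix (Fin n) (Fin n) ℝ) (B : Matrix (Fin n) (Fin m) ℝ)
    (K : Matrix (Fin m) (Fin n) ℝ) (σw : ℝ) {C ρ : ℝ} (hρ0 : 0 < ρ) (hρ1 : ρ < 1)
    (hL : ∀ k, frob ((A + B * K) ^ k) ≤ C * ρ ^ k) :
    clCov A B K σw = σw ^ 2 • (1 : Matrix (Fin n) (Fin n) ℝ) +
      (A + B * K) * clCov A B K σw * (A + B * K)ᵀ := by
  set L := A + B * K with hLdef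
  have hsum : Summable (fun k : ℕ => L ^ k * (L ^ k)ᵀ) :=
    summable_pow_mul_transpose L hρ0 hρ1 hL
  have key : (∑' k : ℕ, L ^ k * (L ^ k)ᵀ) =
      1 + L * (∑' k : ℕ, L ^ k * (L ^ k)ᵀ) * Lᵀ := by
    conv_lhs => rw [hsum.tsum_eq_zero_add]
    congr 1
    · simp
    have hs' : Summable fun k : ℕ => L ^ k * (L ^ k)ᵀ * Lᵀ := hsum.mul_right _
    calc (∑' k : ℕ, L ^ (k + 1) * (L ^ (k + 1))ᵀ)
        = ∑' k : ℕ, L * (L ^ k * (L ^ k)ᵀ * Lᵀ) := by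
          refine tsum_congr fun k => ?_
          rw [pow_succ', Matrix.transpose_mul]
          simp only [Matrix.mul_assoc]
      _ = L * ∑' k : ℕ, (L ^ k * (L ^ k)ᵀ * Lᵀ) := hs'.tsum_mul_left L
      _ = L * ((∑' k : ℕ, L ^ k * (L ^ k)ᵀ) * Lᵀ) := by rw [hsum.tsum_mul_right Lᵀ]
      _ = L * (∑' k : ℕ, L ^ k * (L ^ k)ᵀ) * Lᵀ := by rw [Matrix.mul_assoc]
  rw [clCov_eq]
  nth_rewrite 1 [key]
  rw [smul_add]
  congr 1
  rw [Matrix.mul_smul, Matrix.smul_mul]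

lemma clCov_posSemidef (A : Matrix (Fin n) (Fin n) ℝ) (B : Matrix (Fin n) (Fin m) ℝ)
    (K : Matrix (Fin m) (Fin n) ℝ) (σw : ℝ) {C ρ : ℝ} (hρ0 : 0 < ρ) (hρ1 : ρ < 1)
    (hL : ∀ k, frob ((A + B * K) ^ k) ≤ C * ρ ^ k) :
    (clCov A B K σw).PosSemidef := by
  set L := A + B * K with hLdef
  have hsum : Summable (fun k : ℕ => L ^ k * (L ^ k)ᵀ) :=
    summable_pow_mul_transpose L hρ0 hρ1 hL
  have hpsd : ∀ k : ℕ, (L ^ k * (L ^ k)ᵀ).PosSemidef := by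
    intro k
    have := Matrix.posSemidef_self_mul_conjTranspose (L ^ k)
    rwa [conjT_eq_transpose] at this
  have hT : (∑' k : ℕ, L ^ k * (L ^ k)ᵀ).PosSemidef := by
    refine Matrix.PosSemidef.of_dotProduct_mulVec_nonneg ?_ ?_
    · show _ᴴ = _
      rw [Matrix.conjTranspose_tsum]
      exact tsum_congr fun k => (hpsd k).1
    · intro x
      have hφc : Continuous fun M : Matrix (Fin n) (Fin n) ℝ => star x ⬝ᵥ M *ᵥ x :=
        continuous_const.dotProduct (continuous_id.matrix_mulVec continuous_const)
      let φ : Matrix (Fin n) (Fin n) ℝ →+ ℝ :=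
        { toFun := fun M => star x ⬝ᵥ M *ᵥ x
          map_zero' := by simp
          map_add' := fun M N => by simp [Matrix.add_mulVec, dotProduct_add] }
      have hhs : HasSum (fun k => star x ⬝ᵥ (L ^ k * (L ^ k)ᵀ) *ᵥ x)
          (star x ⬝ᵥ (∑' k : ℕ, L ^ k * (L ^ k)ᵀ) *ᵥ x) :=
        hsum.hasSum.map φ hφc
      exact hasSum_le (fun k => (hpsd k).dotProduct_mulVec_nonneg x) hasSum_zero hhs
  rw [clCov_eq]
  refine Matrix.PosSemidef.of_dotProduct_mulVec_nonneg ?_ (fun x => ?_)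
  · show _ᴴ = _
    rw [Matrix.conjTranspose_smul, hT.1, star_trivial]
  · have hq : star x ⬝ᵥ (σw ^ 2 • (∑' k : ℕ, L ^ k * (L ^ k)ᵀ)) *ᵥ x
        = σw ^ 2 * (star x ⬝ᵥ (∑' k : ℕ, L ^ k * (L ^ k)ᵀ) *ᵥ x) := by
      rw [Matrix.smul_mulVec, dotProduct_smul, smul_eq_mul]
    rw [hq]
    exact mul_nonneg (sq_nonneg _) (hT.dotProduct_mulVec_nonneg x)

end Lyap

/-- Generic bound for one term in the telescoping sum. -/
lemma bound_one {n : ℕ} {ι : Type*} [Fintype ι] [DecidableEq ι]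
    (M P : Matrix (Fin n) (Fin n) ℝ) (U V : Matrix (Fin n) ι ℝ) {S : Matrix ι ι ℝ}
    (hS : S.PosSemidef) :
    |(M * (P * (U * S * Vᵀ) * Pᵀ)).trace| ≤ frob M * frob P ^ 2 * frob U * frob V * S.trace := by
  have h1 : M * (P * (U * S * Vᵀ) * Pᵀ) = (M * P * U * S) * (Vᵀ * Pᵀ) := by
    simp only [Matrix.mul_assoc]
  rw [h1, Matrix.trace_mul_comm]
  have h2 : (Vᵀ * Pᵀ) * (M * P * U * S) = (Vᵀ * Pᵀ * M * P * U) * S := by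
    simp only [Matrix.mul_assoc]
  rw [h2]
  refine (psd_trace_bound hS _).trans ?_
  have hX : frob (Vᵀ * Pᵀ * M * P * U) ≤ frob V * frob P * frob M * frob P * frob U := by
    calc frob (Vᵀ * Pᵀ * M * P * U) ≤ frob (Vᵀ * Pᵀ * M * P) * frob U := frob_mul_le _ _
      _ ≤ (frob (Vᵀ * Pᵀ * M) * frob P) * frob U :=
          mul_le_mul_of_nonneg_right (frob_mul_le _ _) (frob_nonneg _)
      _ ≤ ((frob (Vᵀ * Pᵀ) * frob M) * frob P) * frob U :=
          mul_le_mul_of_nonneg_right (mul_le_mul_of_nonneg_right (frob_mul_le _ _)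
            (frob_nonneg _)) (frob_nonneg _)
      _ ≤ (((frob Vᵀ * frob Pᵀ) * frob M) * frob P) * frob U :=
          mul_le_mul_of_nonneg_right (mul_le_mul_of_nonneg_right
            (mul_le_mul_of_nonneg_right (frob_mul_le _ _) (frob_nonneg _))
            (frob_nonneg _)) (frob_nonneg _)
      _ = frob V * frob P * frob M * frob P * frob U := by
          rw [frob_transpose, frob_transpose]
  calc frob (Vᵀ * Pᵀ * M * P * U) * S.trace
      ≤ (frob V * frob P * frob M * frob P * frob U) * S.trace :=
        mul_le_mul_of_nonneg_right hX (psd_trace_nonneg hS)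
    _ = frob M * frob P ^ 2 * frob U * frob V * S.trace := by ring
theorem cost_difference_bound_crude {n m : ℕ}
    (Ahat Astar : Matrix (Fin n) (Fin n) ℝ) (Bhat Bstar : Matrix (Fin n) (Fin m) ℝ)
    (K : Matrix (Fin m) (Fin n) ℝ) (Kbar C ρ σw lam D : ℝ)
    (Q : Matrix (Fin n) (Fin n) ℝ) (R : Matrix (Fin m) (Fin m) ℝ)
    (hK : frob K ≤ Kbar) (hC : 1 ≤ C) (hρ : ρ ∈ Set.Ioo (0 : ℝ) 1)
    (hhat : ∀ k : ℕ, frob ((Ahat + Bhat * K) ^ k) ≤ C * ρ ^ k)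
    (hstar : ∀ k : ℕ, frob ((Astar + Bstar * K) ^ k) ≤ C * ρ ^ k)
    (hσ : 0 < σw) (hQ : Q.IsSymm) (hR : R.IsSymm) (hlam : 0 < lam) (hD : 0 ≤ D)
    (hdiff : frob (fromCols Ahat Bhat - fromCols Astar Bstar) ≤ 2 / lam)
    (hstarnorm : frob (fromCols Astar Bstar) ≤ D + 1 / lam) :
    |((Q + Kᵀ * R * K) * (clCov Astar Bstar K σw - clCov Ahat Bhat K σw)).trace|
      ≤ (1 / lam) * (D + 2 / lam) *
          (4 * C ^ 2 * (frob Q + Kbar ^ 2 * frob R) / (1 - ρ ^ 2)) *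
          (clCovTilde Ahat Bhat K σw).trace := by
  obtain ⟨hρ0, hρ1⟩ := hρ
  have hρsq : ρ ^ 2 < 1 := by nlinarith
  have hρsq0 : (0:ℝ) ≤ ρ ^ 2 := sq_nonneg ρ
  have hone : (0:ℝ) < 1 - ρ ^ 2 := by linarith
  set L1 := Ahat + Bhat * K with hL1def
  set L2 := Astar + Bstar * K with hL2def
  set Sg1 := clCov Ahat Bhat K σw with hSg1def
  set Sg2 := clCov Astar Bstar K σw with hSg2def
  set St : Matrix (Fin n ⊕ Fin m) (Fin n) ℝ := fromRows 1 K with hStdef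
  set Θ1 := fromCols Ahat Bhat with hΘ1def
  set Θ2 := fromCols Astar Bstar with hΘ2def
  set Sgt := clCovTilde Ahat Bhat K σw with hSgtdef
  set Mq := Q + Kᵀ * R * K with hMqdef
  set Dl := Θ2 - Θ1 with hDldef
  set DD := Sg2 - Sg1 with hDDdef
  set E := L2 * Sg1 * L2ᵀ - L1 * Sg1 * L1ᵀ with hEdef
  -- Lyapunov equations
  have hlyap1 : Sg1 = σw ^ 2 • (1 : Matrix (Fin n) (Fin n) ℝ) + L1 * Sg1 * L1ᵀ :=
    clCov_lyap Ahat Bhat K σw hρ0 hρ1 hhat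
  have hlyap2 : Sg2 = σw ^ 2 • (1 : Matrix (Fin n) (Fin n) ℝ) + L2 * Sg2 * L2ᵀ :=
    clCov_lyap Astar Bstar K σw hρ0 hρ1 hstar
  have hSg1psd : Sg1.PosSemidef := clCov_posSemidef Ahat Bhat K σw hρ0 hρ1 hhat
  have hSgtpsd : Sgt.PosSemidef := by
    have h := hSg1psd.mul_mul_conjTranspose_same St
    rw [conjT_eq_transpose] at h
    exact h
  have httrace : 0 ≤ Sgt.trace := psd_trace_nonneg hSgtpsd
  -- recursion for the difference
  have hsub : DD = L2 * Sg2 * L2ᵀ - L1 * Sg1 * L1ᵀ := by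
    rw [hDDdef]
    conv_lhs => rw [hlyap1, hlyap2]
    abel
  have hrec : DD = L2 * DD * L2ᵀ + E := by
    have h : L2 * Sg2 * L2ᵀ - L1 * Sg1 * L1ᵀ
        = L2 * (Sg2 - Sg1) * L2ᵀ + (L2 * Sg1 * L2ᵀ - L1 * Sg1 * L1ᵀ) := by noncomm_ring
    exact hsub.trans h
  -- telescoping
  have hind : ∀ N : ℕ, DD = (∑ k ∈ Finset.range N, L2 ^ k * E * (L2 ^ k)ᵀ)
      + L2 ^ N * DD * (L2 ^ N)ᵀ := by
    intro N
    induction N with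
    | zero => simp
    | succ N ih =>
      have hstep := congrArg (fun X => L2 ^ N * X * (L2 ^ N)ᵀ) hrec
      rw [Finset.sum_range_succ]
      calc DD = (∑ k ∈ Finset.range N, L2 ^ k * E * (L2 ^ k)ᵀ)
            + L2 ^ N * DD * (L2 ^ N)ᵀ := ih
        _ = (∑ k ∈ Finset.range N, L2 ^ k * E * (L2 ^ k)ᵀ)
            + L2 ^ N * (L2 * DD * L2ᵀ + E) * (L2 ^ N)ᵀ := by rw [hstep]
        _ = ((∑ k ∈ Finset.range N, L2 ^ k * E * (L2 ^ k)ᵀ) + L2 ^ N * E * (L2 ^ N)ᵀ)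
            + L2 ^ (N + 1) * DD * (L2 ^ (N + 1))ᵀ := by
            rw [pow_succ, Matrix.transpose_mul]
            noncomm_ring
  have htr : ∀ N : ℕ, (Mq * DD).trace
      = (∑ k ∈ Finset.range N, (Mq * (L2 ^ k * E * (L2 ^ k)ᵀ)).trace)
        + (Mq * (L2 ^ N * DD * (L2 ^ N)ᵀ)).trace := by
    intro N
    conv_lhs => rw [hind N]
    rw [Matrix.mul_add, Matrix.trace_add, Finset.mul_sum, Matrix.trace_sum]
  -- expression for E in terms of Θ's
  have hΘ1S : Θ1 * St = L1 := by
    rw [hΘ1def, hStdef, Matrix.fromCols_mul_fromRows, Matrix.mul_one]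
  have hΘ2S : Θ2 * St = L2 := by
    rw [hΘ2def, hStdef, Matrix.fromCols_mul_fromRows, Matrix.mul_one]
  have hSgt' : Sgt = St * Sg1 * Stᵀ := rfl
  have k2 : L2 * Sg1 * L2ᵀ = Θ2 * Sgt * Θ2ᵀ := by
    rw [← hΘ2S, hSgt']
    simp only [Matrix.transpose_mul, Matrix.mul_assoc]
  have k1 : L1 * Sg1 * L1ᵀ = Θ1 * Sgt * Θ1ᵀ := by
    rw [← hΘ1S, hSgt']
    simp only [Matrix.transpose_mul, Matrix.mul_assoc]
  have k3 : Dl * Sgt * Θ2ᵀ + Θ1 * Sgt * Dlᵀ = Θ2 * Sgt * Θ2ᵀ - Θ1 * Sgt * Θ1ᵀ := by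
    rw [hDldef]
    simp only [Matrix.transpose_sub, Matrix.sub_mul, Matrix.mul_sub]
    abel
  have hE : E = Dl * Sgt * Θ2ᵀ + Θ1 * Sgt * Dlᵀ := by
    rw [hEdef, k1, k2, ← k3]
  -- bound each term of the sum
  have c1nn : 0 ≤ frob Mq * (frob Dl * (frob Θ1 + frob Θ2)) :=
    mul_nonneg (frob_nonneg _) (mul_nonneg (frob_nonneg _)
      (add_nonneg (frob_nonneg _) (frob_nonneg _)))
  have hterm : ∀ k : ℕ, |(Mq * (L2 ^ k * E * (L2 ^ k)ᵀ)).trace|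
      ≤ (frob Mq * (frob Dl * (frob Θ1 + frob Θ2))) * (C ^ 2 * (ρ ^ 2) ^ k) * Sgt.trace := by
    intro k
    have hsplit : Mq * (L2 ^ k * E * (L2 ^ k)ᵀ)
        = Mq * (L2 ^ k * (Dl * Sgt * Θ2ᵀ) * (L2 ^ k)ᵀ)
          + Mq * (L2 ^ k * (Θ1 * Sgt * Dlᵀ) * (L2 ^ k)ᵀ) := by
      rw [hE]
      simp only [Matrix.mul_add, Matrix.add_mul, Matrix.mul_assoc]
    rw [hsplit, Matrix.trace_add]
    have b1 := bound_one Mq (L2 ^ k) Dl Θ2 hSgtpsd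
    have b2 := bound_one Mq (L2 ^ k) Θ1 Dl hSgtpsd
    have hPk : frob (L2 ^ k) ≤ C * ρ ^ k := hstar k
    have hPk2 : frob (L2 ^ k) ^ 2 ≤ C ^ 2 * (ρ ^ 2) ^ k := by
      calc frob (L2 ^ k) ^ 2 ≤ (C * ρ ^ k) ^ 2 := pow_le_pow_left₀ (frob_nonneg _) hPk 2
        _ = C ^ 2 * (ρ ^ 2) ^ k := by ring
    refine (abs_add_le _ _).trans ((add_le_add b1 b2).trans ?_)
    have key : frob Mq * frob (L2 ^ k) ^ 2 * frob Dl * frob Θ2 * Sgt.trace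
        + frob Mq * frob (L2 ^ k) ^ 2 * frob Θ1 * frob Dl * Sgt.trace
        = (frob Mq * (frob Dl * (frob Θ1 + frob Θ2))) * frob (L2 ^ k) ^ 2 * Sgt.trace := by
      ring
    rw [key]
    exact mul_le_mul_of_nonneg_right
      (mul_le_mul_of_nonneg_left hPk2 c1nn) httrace
  -- geometric sum bound
  have hgeo : ∀ N : ℕ, (∑ k ∈ Finset.range N, (ρ ^ 2) ^ k) ≤ 1 / (1 - ρ ^ 2) := by
    intro N
    rw [le_div_iff₀ hone]
    have hm := geom_sum_mul (ρ ^ 2) N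
    have hq : (∑ k ∈ Finset.range N, (ρ ^ 2) ^ k) * (1 - ρ ^ 2) = 1 - (ρ ^ 2) ^ N := by
      linear_combination (-1 : ℝ) * hm
    rw [hq]
    have : (0:ℝ) ≤ (ρ ^ 2) ^ N := pow_nonneg hρsq0 N
    linarith
  have hsnn : 0 ≤ (frob Mq * (frob Dl * (frob Θ1 + frob Θ2))) * C ^ 2 * Sgt.trace :=
    mul_nonneg (mul_nonneg c1nn (sq_nonneg C)) httrace
  -- bound for every N
  have hmain : ∀ N : ℕ, |(Mq * DD).trace|
      ≤ (frob Mq * (frob Dl * (frob Θ1 + frob Θ2))) * C ^ 2 * Sgt.trace * (1 / (1 - ρ ^ 2))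
        + (frob Mq * (C ^ 2 * frob DD)) * (ρ ^ 2) ^ N := by
    intro N
    rw [htr N]
    refine (abs_add_le _ _).trans (add_le_add ?_ ?_)
    · refine (Finset.abs_sum_le_sum_abs _ _).trans ?_
      calc (∑ k ∈ Finset.range N, |(Mq * (L2 ^ k * E * (L2 ^ k)ᵀ)).trace|)
          ≤ ∑ k ∈ Finset.range N,
              (frob Mq * (frob Dl * (frob Θ1 + frob Θ2))) * (C ^ 2 * (ρ ^ 2) ^ k) * Sgt.trace :=
            Finset.sum_le_sum fun k _ => hterm k
        _ = ((frob Mq * (frob Dl * (frob Θ1 + frob Θ2))) * C ^ 2 * Sgt.trace)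
            * ∑ k ∈ Finset.range N, (ρ ^ 2) ^ k := by
            rw [Finset.mul_sum]
            exact Finset.sum_congr rfl fun k _ => by ring
        _ ≤ ((frob Mq * (frob Dl * (frob Θ1 + frob Θ2))) * C ^ 2 * Sgt.trace)
            * (1 / (1 - ρ ^ 2)) := mul_le_mul_of_nonneg_left (hgeo N) hsnn
    · have hN : frob (L2 ^ N) ≤ C * ρ ^ N := hstar N
      have hCρnn : (0:ℝ) ≤ C * ρ ^ N := le_trans (frob_nonneg _) hN
      have hmid : frob (L2 ^ N * DD * (L2 ^ N)ᵀ) ≤ (C * ρ ^ N) * frob DD * (C * ρ ^ N) := by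
        calc frob (L2 ^ N * DD * (L2 ^ N)ᵀ)
            ≤ frob (L2 ^ N * DD) * frob (L2 ^ N)ᵀ := frob_mul_le _ _
          _ = frob (L2 ^ N * DD) * frob (L2 ^ N) := by rw [frob_transpose]
          _ ≤ (frob (L2 ^ N) * frob DD) * frob (L2 ^ N) :=
              mul_le_mul_of_nonneg_right (frob_mul_le _ _) (frob_nonneg _)
          _ ≤ ((C * ρ ^ N) * frob DD) * (C * ρ ^ N) :=
              mul_le_mul (mul_le_mul_of_nonneg_right hN (frob_nonneg _)) hN (frob_nonneg _)
                (mul_nonneg hCρnn (frob_nonneg _))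
      calc |(Mq * (L2 ^ N * DD * (L2 ^ N)ᵀ)).trace|
          ≤ frob Mq * frob (L2 ^ N * DD * (L2 ^ N)ᵀ) := trace_mul_abs_le _ _
        _ ≤ frob Mq * ((C * ρ ^ N) * frob DD * (C * ρ ^ N)) :=
            mul_le_mul_of_nonneg_left hmid (frob_nonneg _)
        _ = (frob Mq * (C ^ 2 * frob DD)) * (ρ ^ 2) ^ N := by ring
  -- take the limit N → ∞
  have hlim : Tendsto (fun N : ℕ =>
      (frob Mq * (frob Dl * (frob Θ1 + frob Θ2))) * C ^ 2 * Sgt.trace * (1 / (1 - ρ ^ 2))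
        + (frob Mq * (C ^ 2 * frob DD)) * (ρ ^ 2) ^ N) atTop
      (nhds ((frob Mq * (frob Dl * (frob Θ1 + frob Θ2))) * C ^ 2 * Sgt.trace * (1 / (1 - ρ ^ 2))
        + (frob Mq * (C ^ 2 * frob DD)) * 0)) :=
    tendsto_const_nhds.add
      ((tendsto_pow_atTop_nhds_zero_of_lt_one hρsq0 hρsq).const_mul _)
  have hfin : |(Mq * DD).trace|
      ≤ (frob Mq * (frob Dl * (frob Θ1 + frob Θ2))) * C ^ 2 * Sgt.trace * (1 / (1 - ρ ^ 2)) := by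
    have h := ge_of_tendsto' hlim hmain
    simpa using h
  -- bound the constants
  have hKb0 : 0 ≤ Kbar := le_trans (frob_nonneg K) hK
  have hMqb : frob Mq ≤ frob Q + Kbar ^ 2 * frob R := by
    refine (frob_add_le Q (Kᵀ * R * K)).trans ?_
    have h1 : frob (Kᵀ * R * K) ≤ (frob Kᵀ * frob R) * frob K := by
      calc frob (Kᵀ * R * K) ≤ frob (Kᵀ * R) * frob K := frob_mul_le _ _
        _ ≤ (frob Kᵀ * frob R) * frob K :=
            mul_le_mul_of_nonneg_right (frob_mul_le _ _) (frob_nonneg _)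
    have h2 : (frob Kᵀ * frob R) * frob K ≤ (Kbar * frob R) * Kbar := by
      rw [frob_transpose]
      exact mul_le_mul (mul_le_mul_of_nonneg_right hK (frob_nonneg R)) hK (frob_nonneg K)
        (mul_nonneg hKb0 (frob_nonneg R))
    have h3 : (Kbar * frob R) * Kbar = Kbar ^ 2 * frob R := by ring
    have := h1.trans h2
    rw [h3] at this
    linarith
  have hDlb : frob Dl ≤ 2 / lam := by
    have hDl' : Dl = -(Θ1 - Θ2) := by rw [hDldef]; abel
    rw [hDl', frob_neg]
    exact hdiff
  have hΘ2b : frob Θ2 ≤ D + 1 / lam := hstarnorm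
  have hΘ1b : frob Θ1 ≤ (D + 1 / lam) + 2 / lam := by
    calc frob Θ1 = frob (Θ2 + (Θ1 - Θ2)) := by rw [show Θ2 + (Θ1 - Θ2) = Θ1 from by abel]
      _ ≤ frob Θ2 + frob (Θ1 - Θ2) := frob_add_le _ _
      _ ≤ (D + 1 / lam) + 2 / lam := add_le_add hΘ2b hdiff
  have hsumb : frob Θ1 + frob Θ2 ≤ 2 * (D + 2 / lam) := by
    calc frob Θ1 + frob Θ2 ≤ ((D + 1 / lam) + 2 / lam) + (D + 1 / lam) :=
        add_le_add hΘ1b hΘ2b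
      _ = 2 * (D + 2 / lam) := by ring
  have hQRnn : 0 ≤ frob Q + Kbar ^ 2 * frob R :=
    add_nonneg (frob_nonneg Q) (mul_nonneg (sq_nonneg _) (frob_nonneg R))
  have hc1 : frob Mq * (frob Dl * (frob Θ1 + frob Θ2))
      ≤ (frob Q + Kbar ^ 2 * frob R) * ((2 / lam) * (2 * (D + 2 / lam))) := by
    have h2 : frob Dl * (frob Θ1 + frob Θ2) ≤ (2 / lam) * (2 * (D + 2 / lam)) :=
      mul_le_mul hDlb hsumb (add_nonneg (frob_nonneg _) (frob_nonneg _)) (by positivity)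
    exact mul_le_mul hMqb h2
      (mul_nonneg (frob_nonneg _) (add_nonneg (frob_nonneg _) (frob_nonneg _))) hQRnn
  -- final assembly
  have hfac : 0 ≤ C ^ 2 * Sgt.trace * (1 / (1 - ρ ^ 2)) :=
    mul_nonneg (mul_nonneg (sq_nonneg C) httrace) (by positivity)
  calc |(Mq * DD).trace|
      ≤ (frob Mq * (frob Dl * (frob Θ1 + frob Θ2))) * C ^ 2 * Sgt.trace * (1 / (1 - ρ ^ 2)) :=
        hfin
    _ = (frob Mq * (frob Dl * (frob Θ1 + frob Θ2))) * (C ^ 2 * Sgt.trace * (1 / (1 - ρ ^ 2))) := by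
        ring
    _ ≤ ((frob Q + Kbar ^ 2 * frob R) * ((2 / lam) * (2 * (D + 2 / lam))))
        * (C ^ 2 * Sgt.trace * (1 / (1 - ρ ^ 2))) := mul_le_mul_of_nonneg_right hc1 hfac
    _ = (1 / lam) * (D + 2 / lam) *
          (4 * C ^ 2 * (frob Q + Kbar ^ 2 * frob R) / (1 - ρ ^ 2)) * Sgt.trace := by
        field_simp
        ring
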